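/- For any topological space X, its Wallman compactification W(X), the space of closed ultrafilters with the topology generated by the sets ⟨U⟩ = {F ∈ W(X) : ∃F ∈ F, F ⊆ U} for U open in X, is a compact topological space. -/

import Mathlib

open Topology

/-- A closed ultrafilter on a topological space `X`: a family of closed sets
not containing `∅`, closed under binary intersections, and containing every
closed set that meets all of its members. -/
structure ClosedUltrafilter (X : Type*) [TopologicalSpace X] where
  sets : Set (Set X)
  isClosed_mem : ∀ F ∈ sets, IsClosed F
  empty_not_mem : ∅ ∉ sets
  inter_mem : ∀ A ∈ sets, ∀ B ∈ sets, A ∩ B ∈ sets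
  mem_of_meets : ∀ F : Set X, IsClosed F →
    (∀ U ∈ sets, (F ∩ U).Nonempty) → F ∈ sets

/-- The Wallman topology on the space of closed ultrafilters, generated by
the sets `⟨U⟩ = {ℱ : ∃ F ∈ ℱ, F ⊆ U}` for `U` open in `X`. -/
instance wallmanTopology (X : Type*) [TopologicalSpace X] :
    TopologicalSpace (ClosedUltrafilter X) :=
  TopologicalSpace.generateFrom
    {S | ∃ U : Set X, IsOpen U ∧
      S = {ℱ : ClosedUltrafilter X | ∃ F ∈ ℱ.sets, F ⊆ U}}

/-- If a closed ultrafilter exists, `X` is nonempty. -/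
lemma ClosedUltrafilter.nonempty_base {X : Type*} [TopologicalSpace X]
    (𝒜 : ClosedUltrafilter X) : Nonempty X := by
  by_contra h
  have hX : (∅ : Set X) ∈ 𝒜.sets := by
    apply 𝒜.mem_of_meets ∅ isClosed_empty
    intro U hU
    exfalso
    have : U ∈ 𝒜.sets := hU
    rcases Set.eq_empty_or_nonempty U with rfl | ⟨x, _⟩
    · exact 𝒜.empty_not_mem this
    · exact h ⟨x⟩
  exact 𝒜.empty_not_mem hX

/-- Any family of closed sets which is intersection-closed and avoids `∅`
extends to a closed ultrafilter. -/
lemma exists_closedUltrafilter_superset {X : Type*} [TopologicalSpace X] [Nonempty X]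
    (D : Set (Set X)) (hcl : ∀ F ∈ D, IsClosed F) (hne : ∅ ∉ D)
    (hint : ∀ A ∈ D, ∀ B ∈ D, A ∩ B ∈ D) :
    ∃ ℱ : ClosedUltrafilter X, D ⊆ ℱ.sets := by
  set S : Set (Set (Set X)) :=
    {E | D ⊆ E ∧ (∀ F ∈ E, IsClosed F) ∧ ∅ ∉ E ∧ ∀ A ∈ E, ∀ B ∈ E, A ∩ B ∈ E} with hS
  have hzorn : ∀ c ⊆ S, IsChain (· ⊆ ·) c → c.Nonempty →
      ∃ ub ∈ S, ∀ s ∈ c, s ⊆ ub := by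
    intro c hcS hchain hcne
    refine ⟨⋃₀ c, ⟨?_, ?_, ?_, ?_⟩, fun s hs => Set.subset_sUnion_of_mem hs⟩
    · obtain ⟨e, he⟩ := hcne
      exact (hcS he).1.trans (Set.subset_sUnion_of_mem he)
    · rintro F ⟨e, he, hFe⟩
      exact (hcS he).2.1 F hFe
    · rintro ⟨e, he, hFe⟩
      exact (hcS he).2.2.1 hFe
    · rintro A ⟨e, he, hAe⟩ B ⟨f, hf, hBf⟩
      rcases hchain.total he hf with hef | hfe
      · exact Set.subset_sUnion_of_mem hf ((hcS hf).2.2.2 A (hef hAe) B hBf)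
      · exact Set.subset_sUnion_of_mem he ((hcS he).2.2.2 A hAe B (hfe hBf))
  obtain ⟨E, hDE, hEmax⟩ := zorn_subset_nonempty S hzorn D ⟨le_refl D, hcl, hne, hint⟩
  obtain ⟨hDE', hEcl, hEne, hEint⟩ := hEmax.1
  -- `univ ∈ E` by maximality
  have huniv : Set.univ ∈ E := by
    have h1 : insert Set.univ E ∈ S := by
      refine ⟨hDE'.trans (Set.subset_insert _ _), ?_, ?_, ?_⟩
      · rintro F (rfl | hF)
        · exact isClosed_univ
        · exact hEcl F hF
      · rintro (h | h)
        · exact Set.empty_ne_univ h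
        · exact hEne h
      · rintro A (rfl | hA) B (rfl | hB)
        · simp
        · simpa using Or.inr hB
        · simpa using Or.inr hA
        · exact Or.inr (hEint A hA B hB)
    have := hEmax.2 h1 (Set.subset_insert _ _)
    exact this (Set.mem_insert _ _)
  -- mem_of_meets via maximality
  have hmeets : ∀ F : Set X, IsClosed F →
      (∀ U ∈ E, (F ∩ U).Nonempty) → F ∈ E := by
    intro F hFcl hF
    set E₂ : Set (Set X) := E ∪ {G | ∃ U ∈ E, G = F ∩ U} with hE₂
    have h2 : E₂ ∈ S := by
      refine ⟨hDE'.trans Set.subset_union_left, ?_, ?_, ?_⟩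
      · rintro G (hG | ⟨U, hU, rfl⟩)
        · exact hEcl G hG
        · exact hFcl.inter (hEcl U hU)
      · rintro (h | ⟨U, hU, h⟩)
        · exact hEne h
        · exact (hF U hU).ne_empty h.symm
      · rintro A (hA | ⟨U, hU, rfl⟩) B (hB | ⟨V, hV, rfl⟩)
        · exact Or.inl (hEint A hA B hB)
        · refine Or.inr ⟨A ∩ V, hEint A hA V hV, ?_⟩
          ext x; simp; tauto
        · refine Or.inr ⟨U ∩ B, hEint U hU B hB, ?_⟩
          ext x; simp; tauto
        · refine Or.inr ⟨U ∩ V, hEint U hU V hV, ?_⟩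
          ext x; simp; tauto
    have hsub := hEmax.2 h2 Set.subset_union_left
    have : F ∈ E₂ := Or.inr ⟨Set.univ, huniv, (Set.inter_univ F).symm⟩
    exact hsub this
  exact ⟨⟨E, hEcl, hEne, hEint, hmeets⟩, hDE⟩

/-- The Wallman compactification `W(X)` of any topological space `X` is
compact. -/
theorem stmt12 (X : Type*) [TopologicalSpace X] :
    CompactSpace (ClosedUltrafilter X) := by
  rw [← isCompact_univ_iff, isCompact_iff_ultrafilter_le_nhds]
  intro 𝒢 _
  have hne : Nonempty (ClosedUltrafilter X) := Filter.nonempty_of_neBot (𝒢 : Filter (ClosedUltrafilter X))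
  obtain ⟨𝒜⟩ := hne
  haveI : Nonempty X := 𝒜.nonempty_base
  -- the family of closed sets generically belonging to members of 𝒢
  set D : Set (Set X) :=
    {F | IsClosed F ∧ {𝒞 : ClosedUltrafilter X | F ∈ 𝒞.sets} ∈ 𝒢} with hD
  have hDcl : ∀ F ∈ D, IsClosed F := fun F hF => hF.1
  have hDne : (∅ : Set X) ∉ D := by
    rintro ⟨-, h⟩
    have : {𝒞 : ClosedUltrafilter X | (∅ : Set X) ∈ 𝒞.sets} = ∅ := by
      ext 𝒞; simp [𝒞.empty_not_mem]
    rw [this] at h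
    exact Filter.empty_notMem (𝒢 : Filter (ClosedUltrafilter X)) h
  have hDint : ∀ A ∈ D, ∀ B ∈ D, A ∩ B ∈ D := by
    rintro A ⟨hAcl, hA⟩ B ⟨hBcl, hB⟩
    refine ⟨hAcl.inter hBcl, ?_⟩
    filter_upwards [hA, hB] with 𝒞 h1 h2
    exact 𝒞.inter_mem A h1 B h2
  obtain ⟨ℱ, hDℱ⟩ := exists_closedUltrafilter_superset D hDcl hDne hDint
  refine ⟨ℱ, Set.mem_univ _, ?_⟩
  rw [wallmanTopology, TopologicalSpace.nhds_generateFrom]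
  refine le_iInf₂ ?_
  rintro s ⟨hℱs, U, hU, rfl⟩
  rw [Filter.le_principal_iff]
  by_contra h
  replace h := (Ultrafilter.compl_mem_iff_notMem (f := 𝒢)).mpr h
  -- then Uᶜ ∈ D ⊆ ℱ.sets
  have hUc : Uᶜ ∈ D := by
    refine ⟨hU.isClosed_compl, ?_⟩
    filter_upwards [h] with 𝒞 h𝒞
    apply 𝒞.mem_of_meets Uᶜ hU.isClosed_compl
    intro G hG
    rw [Set.inter_comm, ← Set.not_disjoint_iff_nonempty_inter]
    intro hdis
    exact h𝒞 ⟨G, hG, Set.disjoint_compl_right_iff_subset.mp hdis⟩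
  obtain ⟨F, hFℱ, hFU⟩ := hℱs
  have : F ∩ Uᶜ ∈ ℱ.sets := ℱ.inter_mem F hFℱ Uᶜ (hDℱ hUc)
  have hempty : F ∩ Uᶜ = ∅ := by
    rw [← Set.disjoint_iff_inter_eq_empty]
    exact Set.disjoint_compl_right_iff_subset.mpr hFU
  rw [hempty] at this
  exact ℱ.empty_not_mem this
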